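/- With p_n = 3·∫_0^1 ∫_0^1 (1-a)^3·(3-(1-a)(3-b))^n/(3-(1-a)(2-b))^{n+1} db da, the mean ∑_{n=0}^∞ n·p_n equals 2; equivalently, 3·∫_0^1 ∫_0^1 (1-a)·(a(3-b)+b) db da = 2. -/

import Mathlib

open MeasureTheory

noncomputable def stitP (n : ℕ) : ℝ :=
  3 * ∫ a in (0:ℝ)..1, ∫ b in (0:ℝ)..1,
    (1 - a) ^ 3 * (3 - (1 - a) * (3 - b)) ^ n / (3 - (1 - a) * (2 - b)) ^ (n + 1)

namespace StitAux

open Set _root_.intervalIntegral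
open scoped ENNReal NNReal

noncomputable def f (n : ℕ) (a b : ℝ) : ℝ :=
  (1 - a) ^ 3 * (3 - (1 - a) * (3 - b)) ^ n / (3 - (1 - a) * (2 - b)) ^ (n + 1)

lemma measurable_f (n : ℕ) : Measurable (fun p : ℝ × ℝ => f n p.1 p.2) := by
  unfold f
  fun_prop

lemma q_nonneg {a b : ℝ} (ha : a ∈ Ioc (0:ℝ) 1) (hb : b ∈ Ioc (0:ℝ) 1) :
    0 ≤ 3 - (1 - a) * (3 - b) := by
  have h := mul_le_mul (by linarith [ha.1] : 1 - a ≤ 1) (by linarith [hb.1] : 3 - b ≤ 3)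
    (by linarith [hb.2]) (by norm_num)
  linarith

lemma q_le_three {a b : ℝ} (ha : a ∈ Ioc (0:ℝ) 1) (hb : b ∈ Ioc (0:ℝ) 1) :
    3 - (1 - a) * (3 - b) ≤ 3 := by
  have h := mul_nonneg (by linarith [ha.2] : (0:ℝ) ≤ 1 - a) (by linarith [hb.2] : (0:ℝ) ≤ 3 - b)
  linarith

lemma r_ge_one {a b : ℝ} (ha : a ∈ Ioc (0:ℝ) 1) (hb : b ∈ Ioc (0:ℝ) 1) :
    (1:ℝ) ≤ 3 - (1 - a) * (2 - b) := by
  have h := mul_le_mul (by linarith [ha.1] : 1 - a ≤ 1) (by linarith [hb.1] : 2 - b ≤ 2)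
    (by linarith [hb.2]) (by norm_num)
  linarith

lemma f_nonneg (n : ℕ) {a b : ℝ} (ha : a ∈ Ioc (0:ℝ) 1) (hb : b ∈ Ioc (0:ℝ) 1) :
    0 ≤ f n a b := by
  unfold f
  apply div_nonneg
  · exact mul_nonneg (pow_nonneg (by linarith [ha.2]) 3) (pow_nonneg (q_nonneg ha hb) n)
  · exact pow_nonneg (by linarith [r_ge_one ha hb]) _

lemma f_le (n : ℕ) {a b : ℝ} (ha : a ∈ Ioc (0:ℝ) 1) (hb : b ∈ Ioc (0:ℝ) 1) :
    f n a b ≤ 3 ^ n := by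
  have hu0 : (0:ℝ) ≤ 1 - a := by linarith [ha.2]
  have hq0 := q_nonneg ha hb
  have hr1 := r_ge_one ha hb
  have h1 : (1:ℝ) ≤ (3 - (1 - a) * (2 - b)) ^ (n + 1) := by
    have := pow_le_pow_left₀ (by norm_num : (0:ℝ) ≤ 1) hr1 (n + 1)
    simpa using this
  have h2 : f n a b ≤ (1 - a) ^ 3 * (3 - (1 - a) * (3 - b)) ^ n :=
    div_le_self (mul_nonneg (pow_nonneg hu0 3) (pow_nonneg hq0 n)) h1
  have h3 : (1 - a) ^ 3 ≤ 1 := by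
    have := pow_le_pow_left₀ hu0 (by linarith [ha.1] : 1 - a ≤ 1) 3
    simpa using this
  have h4 : (3 - (1 - a) * (3 - b)) ^ n ≤ 3 ^ n :=
    pow_le_pow_left₀ hq0 (q_le_three ha hb) n
  calc f n a b ≤ (1 - a) ^ 3 * (3 - (1 - a) * (3 - b)) ^ n := h2
    _ ≤ 1 * 3 ^ n := mul_le_mul h3 h4 (pow_nonneg hq0 n) (by norm_num)
    _ = 3 ^ n := one_mul _

lemma hasSum_pt {a b : ℝ} (ha : a ∈ Ioc (0:ℝ) 1) (hb : b ∈ Ioc (0:ℝ) 1) :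
    HasSum (fun n : ℕ => (n : ℝ) * f n a b) ((1 - a) * (a * (3 - b) + b)) := by
  rcases eq_or_lt_of_le ha.2 with h1 | h1
  · subst h1
    simpa [f] using (hasSum_zero : HasSum (fun _ : ℕ => (0:ℝ)) 0)
  · set q : ℝ := 3 - (1 - a) * (3 - b) with hqdef
    set r : ℝ := 3 - (1 - a) * (2 - b) with hrdef
    have hu : 0 < 1 - a := by linarith
    have hr1 : (1:ℝ) ≤ r := r_ge_one ha hb
    have hr0 : (0:ℝ) < r := by linarith
    have hq0 : 0 ≤ q := q_nonneg ha hb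
    have hqr : q < r := by rw [hqdef, hrdef]; nlinarith
    have hx : ‖q / r‖ < 1 := by
      rw [Real.norm_eq_abs, abs_of_nonneg (div_nonneg hq0 hr0.le), div_lt_one hr0]
      exact hqr
    have H := (hasSum_coe_mul_geometric_of_norm_lt_one hx).mul_left ((1 - a) ^ 3 / r)
    have h1x : 1 - q / r = (1 - a) / r := by
      field_simp
      rw [hqdef, hrdef]; ring
    convert H using 1
    · exact rfl
    · funext n
      show (n:ℝ) * f n a b = (1 - a) ^ 3 / r * ((n : ℝ) * (q / r) ^ n)
      unfold f
      rw [div_pow, pow_succ]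
      rw [← hqdef, ← hrdef]
      ring
    · rw [h1x]
      have hval : (q / r) / ((1 - a) / r) ^ 2 = q * r / (1 - a) ^ 2 := by
        field_simp
      rw [hval, hqdef]
      field_simp
      ring

lemma inner_eq (a : ℝ) :
    ∫ b in (0:ℝ)..1, (1 - a) * (a * (3 - b) + b) = 3 * a * (1 - a) + (1 - a) ^ 2 / 2 := by
  have h : ∀ b : ℝ, (1 - a) * (a * (3 - b) + b) = 3 * a * (1 - a) + (1 - a) ^ 2 * b :=
    fun b => by ring
  simp only [h]
  rw [intervalIntegral.integral_add (f := fun _ => 3 * a * (1 - a))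
    (g := fun b : ℝ => (1 - a) ^ 2 * b) (intervalIntegrable_const)
    ((continuous_const.mul continuous_id').intervalIntegrable _ _),
    intervalIntegral.integral_const, intervalIntegral.integral_const_mul, integral_id]
  norm_num
  ring

lemma part2 :
    3 * (∫ a in (0:ℝ)..1, ∫ b in (0:ℝ)..1, (1 - a) * (a * (3 - b) + b)) = 2 := by
  simp only [inner_eq]
  have h : ∀ a : ℝ, 3 * a * (1 - a) + (1 - a) ^ 2 / 2
      = 1 / 2 + 2 * a - 5 / 2 * a ^ 2 := fun a => by ring
  simp only [h]
  rw [intervalIntegral.integral_sub (f := fun a : ℝ => 1 / 2 + 2 * a)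
      (g := fun a : ℝ => 5 / 2 * a ^ 2)
      ((continuous_const.add (continuous_const.mul continuous_id')).intervalIntegrable _ _)
      ((continuous_const.mul (continuous_pow 2)).intervalIntegrable _ _),
    intervalIntegral.integral_add (f := fun _ : ℝ => (1 / 2 : ℝ)) (g := fun a : ℝ => 2 * a)
      (intervalIntegrable_const)
      ((continuous_const.mul continuous_id').intervalIntegrable _ _),
    intervalIntegral.integral_const, intervalIntegral.integral_const_mul,
    intervalIntegral.integral_const_mul, integral_id, integral_pow]
  norm_num

noncomputable def nu : Measure (ℝ × ℝ) :=
  (volume.restrict (Ioc (0:ℝ) 1)).prod (volume.restrict (Ioc (0:ℝ) 1))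

instance : IsFiniteMeasure (volume.restrict (Ioc (0:ℝ) 1)) :=
  ⟨by rw [Measure.restrict_apply_univ]; exact measure_Ioc_lt_top⟩

instance : IsFiniteMeasure nu := by unfold nu; infer_instance

lemma ae_mem : ∀ᵐ p ∂nu, p ∈ Ioc (0:ℝ) 1 ×ˢ Ioc (0:ℝ) 1 := by
  rw [nu, Measure.prod_restrict]
  exact ae_restrict_mem (measurableSet_Ioc.prod measurableSet_Ioc)

lemma integrable_F (n : ℕ) : Integrable (fun p : ℝ × ℝ => (n:ℝ) * f n p.1 p.2) nu := by
  refine Integrable.mono' (integrable_const ((n:ℝ) * 3 ^ n))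
    (((measurable_f n).const_mul _).aestronglyMeasurable) ?_
  filter_upwards [ae_mem] with p hp
  rw [Real.norm_eq_abs, abs_of_nonneg (mul_nonneg (Nat.cast_nonneg n) (f_nonneg n hp.1 hp.2))]
  exact mul_le_mul_of_nonneg_left (f_le n hp.1 hp.2) (Nat.cast_nonneg n)

lemma G_nonneg {p : ℝ × ℝ} (hp : p ∈ Ioc (0:ℝ) 1 ×ˢ Ioc (0:ℝ) 1) :
    0 ≤ (1 - p.1) * (p.1 * (3 - p.2) + p.2) := by
  obtain ⟨⟨ha0, ha1⟩, hb0, hb1⟩ := hp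
  have h1 : 0 ≤ p.1 * (3 - p.2) := mul_nonneg ha0.le (by linarith)
  have h2 : (0:ℝ) ≤ 1 - p.1 := by linarith
  nlinarith

lemma G_le {p : ℝ × ℝ} (hp : p ∈ Ioc (0:ℝ) 1 ×ˢ Ioc (0:ℝ) 1) :
    (1 - p.1) * (p.1 * (3 - p.2) + p.2) ≤ 4 := by
  obtain ⟨⟨ha0, ha1⟩, hb0, hb1⟩ := hp
  have h1 : p.1 * (3 - p.2) ≤ 1 * 3 :=
    mul_le_mul ha1 (by linarith) (by linarith) (by norm_num)
  have h2 : (1 - p.1) * (p.1 * (3 - p.2) + p.2) ≤ 1 * (p.1 * (3 - p.2) + p.2) := by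
    have h3 : 0 ≤ p.1 * (3 - p.2) + p.2 := by nlinarith [mul_nonneg ha0.le (by linarith : (0:ℝ) ≤ 3 - p.2)]
    exact mul_le_mul_of_nonneg_right (by linarith) h3
  nlinarith

lemma integrable_G :
    Integrable (fun p : ℝ × ℝ => (1 - p.1) * (p.1 * (3 - p.2) + p.2)) nu := by
  refine Integrable.mono' (integrable_const 4)
    ((by fun_prop :
      Measurable (fun p : ℝ × ℝ => (1 - p.1) * (p.1 * (3 - p.2) + p.2))).aestronglyMeasurable) ?_
  filter_upwards [ae_mem] with p hp
  rw [Real.norm_eq_abs, abs_of_nonneg (G_nonneg hp)]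
  exact G_le hp

lemma part1 : ∑' n : ℕ, (n : ℝ) * stitP n = 2 := by
  have hmeas : ∀ n : ℕ, AEStronglyMeasurable (fun p : ℝ × ℝ => (n:ℝ) * f n p.1 p.2) nu :=
    fun n => ((measurable_f n).const_mul _).aestronglyMeasurable
  have hf' : ∑' n : ℕ, ∫⁻ p, ‖(n:ℝ) * f n p.1 p.2‖₊ ∂nu ≠ ⊤ := by
    rw [← lintegral_tsum (fun n => ((measurable_f n).const_mul _).nnnorm.coe_nnreal_ennreal.aemeasurable)]
    have hb : ∀ᵐ p ∂nu, ∑' n : ℕ, (‖(n:ℝ) * f n p.1 p.2‖₊ : ℝ≥0∞) ≤ 4 := by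
      filter_upwards [ae_mem] with p hp
      have hs := hasSum_pt hp.1 hp.2
      have hnn : ∀ n : ℕ, 0 ≤ (n:ℝ) * f n p.1 p.2 :=
        fun n => mul_nonneg (Nat.cast_nonneg n) (f_nonneg n hp.1 hp.2)
      have heq : ∀ n : ℕ, (‖(n:ℝ) * f n p.1 p.2‖₊ : ℝ≥0∞)
          = ENNReal.ofReal ((n:ℝ) * f n p.1 p.2) :=
        fun n => Real.enorm_eq_ofReal (hnn n)
      simp only [heq]
      rw [← ENNReal.ofReal_tsum_of_nonneg hnn hs.summable, hs.tsum_eq]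
      calc ENNReal.ofReal ((1 - p.1) * (p.1 * (3 - p.2) + p.2))
          ≤ ENNReal.ofReal 4 := ENNReal.ofReal_le_ofReal (G_le hp)
        _ = 4 := by norm_num
    refine ne_of_lt (lt_of_le_of_lt (lintegral_mono_ae hb) ?_)
    rw [lintegral_const]
    exact ENNReal.mul_lt_top (by norm_num) (measure_lt_top _ _)
  have hstep : ∀ n : ℕ, (n:ℝ) * stitP n = 3 * ∫ p, (n:ℝ) * f n p.1 p.2 ∂nu := by
    intro n
    have h1 : (n:ℝ) * stitP n = 3 * ∫ a in (0:ℝ)..1, ∫ b in (0:ℝ)..1, (n:ℝ) * f n a b := by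
      simp only [stitP, f, intervalIntegral.integral_const_mul]
      ring
    rw [h1]
    congr 1
    simp only [intervalIntegral.integral_of_le zero_le_one]
    exact MeasureTheory.integral_integral (f := fun a b => (n:ℝ) * f n a b) (integrable_F n)
  calc ∑' n : ℕ, (n:ℝ) * stitP n
      = ∑' n : ℕ, 3 * ∫ p, (n:ℝ) * f n p.1 p.2 ∂nu := tsum_congr hstep
    _ = 3 * ∑' n : ℕ, ∫ p, (n:ℝ) * f n p.1 p.2 ∂nu := tsum_mul_left
    _ = 3 * ∫ p, ∑' n : ℕ, (n:ℝ) * f n p.1 p.2 ∂nu := by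
        rw [integral_tsum hmeas hf']
    _ = 3 * ∫ p, (1 - p.1) * (p.1 * (3 - p.2) + p.2) ∂nu := by
        congr 1
        refine integral_congr_ae ?_
        filter_upwards [ae_mem] with p hp
        exact (hasSum_pt hp.1 hp.2).tsum_eq
    _ = 3 * ∫ a in (0:ℝ)..1, ∫ b in (0:ℝ)..1, (1 - a) * (a * (3 - b) + b) := by
        congr 1
        simp only [intervalIntegral.integral_of_le zero_le_one]
        exact (MeasureTheory.integral_integral
          (f := fun a b => (1 - a) * (a * (3 - b) + b)) integrable_G).symm
    _ = 2 := part2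

end StitAux

theorem stit_mean_number_of_vertices :
    (∑' n : ℕ, (n : ℝ) * stitP n = 2) ∧
    3 * (∫ a in (0:ℝ)..1, ∫ b in (0:ℝ)..1, (1 - a) * (a * (3 - b) + b)) = 2 := by
  exact ⟨StitAux.part1, StitAux.part2⟩
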